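/- Let Z be a hypergeometric random variable with parameters (k, k, n) (i.e., the size of the intersection of two independent uniformly random k-subsets of {1,…,n}), and let θ be real. Then E[exp(θ²·Z)] ≤ [1 + (k/n)(e^{θ²} − 1)]^k ≤ exp( (k²/n)·e^{θ²} ). -/

import Mathlib

open Finset

-- Vandermonde-type identity for factorial moments of the hypergeometric pmf
lemma vdm (n k j : ℕ) (hj : j ≤ k) (hkn : k ≤ n) :
    ∑ i ∈ range (k + 1), Nat.choose k i * Nat.choose (n - k) (k - i) * Nat.choose i j
      = Nat.choose k j * Nat.choose (n - j) (k - j) := by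
  rw [← Finset.sum_range_add_sum_Ico _ (show j ≤ k+1 by omega)]
  have h0 : ∑ i ∈ range j, Nat.choose k i * Nat.choose (n - k) (k - i) * Nat.choose i j = 0 := by
    apply Finset.sum_eq_zero
    intro i hi
    rw [Nat.choose_eq_zero_of_lt (Finset.mem_range.mp hi), Nat.mul_zero]
  rw [h0, Nat.zero_add]
  rw [Finset.sum_Ico_eq_sum_range]
  have hr : k + 1 - j = (k - j) + 1 := by omega
  rw [hr]
  have key : ∀ m ∈ range ((k - j) + 1),
      Nat.choose k (j + m) * Nat.choose (n - k) (k - (j + m)) * Nat.choose (j + m) j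
        = Nat.choose k j * (Nat.choose (k - j) m * Nat.choose (n - k) ((k - j) - m)) := by
    intro m hm
    have hm' : m ≤ k - j := Nat.lt_succ_iff.mp (Finset.mem_range.mp hm)
    have hjm : j + m ≤ k := by omega
    have := Nat.choose_mul (n := k) (Nat.le_add_right j m)
    have hsub : k - (j + m) = (k - j) - m := by omega
    have hsub2 : j + m - j = m := by omega
    calc Nat.choose k (j + m) * Nat.choose (n - k) (k - (j + m)) * Nat.choose (j + m) j
        = Nat.choose k (j + m) * Nat.choose (j + m) j * Nat.choose (n - k) (k - (j + m)) := by ring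
      _ = Nat.choose k j * Nat.choose (k - j) m * Nat.choose (n - k) ((k - j) - m) := by
          rw [this, hsub, hsub2]
      _ = Nat.choose k j * (Nat.choose (k - j) m * Nat.choose (n - k) ((k - j) - m)) := by ring
  rw [Finset.sum_congr rfl key, ← Finset.mul_sum]
  congr 1
  have hnj : n - j = (k - j) + (n - k) := by omega
  rw [hnj, Nat.add_choose_eq]
  rw [Finset.Nat.sum_antidiagonal_eq_sum_range_succ_mk]

-- descending-ratio bound
lemma ratio_le (n k : ℕ) (hkn : k ≤ n) :
    ∀ j, j ≤ k → Nat.choose (n - j) (k - j) * n ^ j ≤ Nat.choose n k * k ^ j := by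
  intro j
  induction j with
  | zero => simp
  | succ j ih =>
    intro hj
    have hj' : j ≤ k := by omega
    have IH := ih hj'
    have hnj : 0 < n - j := by omega
    -- (n-j) * C(n-j-1, k-j-1) = C(n-j, k-j) * (k-j)
    have hid : (n - j) * Nat.choose (n - (j+1)) (k - (j+1)) = Nat.choose (n - j) (k - j) * (k - j) := by
      have h1 : n - j = (n - (j+1)) + 1 := by omega
      have h2 : k - j = (k - (j+1)) + 1 := by omega
      rw [h1, h2]
      exact Nat.add_one_mul_choose_eq _ _
    refine Nat.le_of_mul_le_mul_left ?_ hnj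
    · calc (n - j) * (Nat.choose (n - (j+1)) (k - (j+1)) * n ^ (j+1))
          = (Nat.choose (n - j) (k - j) * n ^ j) * ((k - j) * n) := by
            rw [← Nat.mul_assoc, hid]; ring
        _ ≤ (Nat.choose n k * k ^ j) * ((k - j) * n) :=
            Nat.mul_le_mul_right _ IH
        _ ≤ (Nat.choose n k * k ^ j) * ((n - j) * k) := by
            apply Nat.mul_le_mul_left
            have : (k - j) * n ≤ (n - j) * k := by
              have := Nat.mul_le_mul_right j hkn
              calc (k - j) * n = k * n - j * n := by rw [Nat.sub_mul]
                _ ≤ n * k - j * k := by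
                    rw [Nat.mul_comm k n]
                    apply Nat.sub_le_sub_left
                    exact Nat.mul_le_mul_left j hkn
                _ = (n - j) * k := by rw [Nat.sub_mul]
            exact this
        _ = (n - j) * (Nat.choose n k * k ^ (j+1)) := by ring

/-- Moment generating bound for the hypergeometric distribution with parameters `(k, k, n)`:
the expectation `E[exp (θ² Z)]`, written out as a sum against the hypergeometric pmf, is at
most `(1 + (k/n)(e^{θ²} - 1))^k ≤ exp((k²/n) e^{θ²})`. -/
theorem hypergeometric_mgf_bound (n k : ℕ) (hk : 1 ≤ k) (hkn : k ≤ n) (θ : ℝ) :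
    (∑ i ∈ Finset.range (k + 1),
        ((Nat.choose k i * Nat.choose (n - k) (k - i) : ℝ) / (Nat.choose n k : ℝ)) *
          Real.exp (θ ^ 2 * i)) ≤
      (1 + ((k : ℝ) / n) * (Real.exp (θ ^ 2) - 1)) ^ k ∧
    (1 + ((k : ℝ) / n) * (Real.exp (θ ^ 2) - 1)) ^ k ≤
      Real.exp (((k : ℝ) ^ 2 / n) * Real.exp (θ ^ 2)) := by
  have hn : 1 ≤ n := le_trans hk hkn
  have hn0 : (0:ℝ) < n := by exact_mod_cast hn
  have hC : (0:ℝ) < (Nat.choose n k : ℝ) := by exact_mod_cast Nat.choose_pos hkn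
  set x := Real.exp (θ ^ 2) with hxdef
  have hx1 : 1 ≤ x := Real.one_le_exp (sq_nonneg θ)
  set y := x - 1 with hydef
  have hy0 : 0 ≤ y := by simp only [hydef]; linarith
  have hp0 : 0 ≤ (k:ℝ)/n := by positivity
  constructor
  · -- first inequality
    have hexp : ∀ i : ℕ, Real.exp (θ ^ 2 * i) = x ^ i := by
      intro i
      rw [hxdef, ← Real.exp_nat_mul, mul_comm]
    have hpow : ∀ i ∈ range (k+1), x ^ i = ∑ j ∈ range (k+1), (Nat.choose i j : ℝ) * y ^ j := by
      intro i hi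
      have hik : i ≤ k := Nat.lt_succ_iff.mp (Finset.mem_range.mp hi)
      have hxy : x = y + 1 := by simp [hydef]
      rw [hxy, add_pow]
      simp only [one_pow, mul_one]
      rw [Finset.sum_subset (Finset.range_subset_range.mpr (Nat.succ_le_succ hik))]
      · exact Finset.sum_congr rfl (fun j _ => by ring)
      · intro j _ hj
        have : i < j := by
          simp only [Finset.mem_range, not_lt] at hj
          omega
        rw [Nat.choose_eq_zero_of_lt this]
        simp
    calc ∑ i ∈ range (k + 1),
          ((Nat.choose k i * Nat.choose (n - k) (k - i) : ℝ) / (Nat.choose n k : ℝ)) *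
            Real.exp (θ ^ 2 * i)
        = ∑ j ∈ range (k + 1), ∑ i ∈ range (k + 1),
            ((Nat.choose k i * Nat.choose (n - k) (k - i) : ℝ) / (Nat.choose n k : ℝ)) *
              ((Nat.choose i j : ℝ) * y ^ j) := by
          rw [Finset.sum_comm]
          apply Finset.sum_congr rfl
          intro i hi
          rw [hexp i, hpow i hi, Finset.mul_sum]
      _ = ∑ j ∈ range (k + 1),
            ((Nat.choose k j * Nat.choose (n - j) (k - j) : ℝ) / (Nat.choose n k : ℝ)) * y ^ j := by
          apply Finset.sum_congr rfl
          intro j hj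
          have hjk : j ≤ k := Nat.lt_succ_iff.mp (Finset.mem_range.mp hj)
          have hv := vdm n k j hjk hkn
          have hv' : (∑ i ∈ range (k+1),
              (Nat.choose k i * Nat.choose (n - k) (k - i) * Nat.choose i j : ℝ))
              = (Nat.choose k j * Nat.choose (n - j) (k - j) : ℝ) := by
            exact_mod_cast congrArg (Nat.cast : ℕ → ℝ) hv
          calc ∑ i ∈ range (k + 1),
                ((Nat.choose k i * Nat.choose (n - k) (k - i) : ℝ) / (Nat.choose n k : ℝ)) *
                  ((Nat.choose i j : ℝ) * y ^ j)
              = (∑ i ∈ range (k+1),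
                  (Nat.choose k i * Nat.choose (n - k) (k - i) * Nat.choose i j : ℝ))
                  / (Nat.choose n k : ℝ) * y ^ j := by
                rw [Finset.sum_div, Finset.sum_mul]
                exact Finset.sum_congr rfl (fun i _ => by push_cast; ring)
            _ = ((Nat.choose k j * Nat.choose (n - j) (k - j) : ℝ) / (Nat.choose n k : ℝ)) * y ^ j := by
                rw [hv']
      _ ≤ ∑ j ∈ range (k + 1), (Nat.choose k j : ℝ) * ((k:ℝ)/n)^j * y ^ j := by
          apply Finset.sum_le_sum
          intro j hj
          have hjk : j ≤ k := Nat.lt_succ_iff.mp (Finset.mem_range.mp hj)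
          have hr := ratio_le n k hkn j hjk
          have hr' : (Nat.choose (n - j) (k - j) : ℝ) * (n:ℝ)^j ≤ (Nat.choose n k : ℝ) * (k:ℝ)^j := by
            exact_mod_cast hr
          have hdiv : (Nat.choose (n - j) (k - j) : ℝ) / (Nat.choose n k : ℝ) ≤ ((k:ℝ)/n)^j := by
            rw [div_pow, div_le_div_iff₀ hC (by positivity)]
            linarith
          have hyj : (0:ℝ) ≤ y ^ j := pow_nonneg hy0 j
          have hb : (0:ℝ) ≤ (Nat.choose k j : ℝ) := by positivity
          calc ((Nat.choose k j * Nat.choose (n - j) (k - j) : ℝ) / (Nat.choose n k : ℝ)) * y ^ j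
              = ((Nat.choose k j : ℝ) * ((Nat.choose (n - j) (k - j) : ℝ) / (Nat.choose n k : ℝ))) * y ^ j := by
                push_cast; ring
            _ ≤ ((Nat.choose k j : ℝ) * ((k:ℝ)/n)^j) * y ^ j := by
                apply mul_le_mul_of_nonneg_right _ hyj
                exact mul_le_mul_of_nonneg_left hdiv hb
      _ = (1 + ((k : ℝ) / n) * y) ^ k := by
          rw [show (1 + ((k : ℝ) / n) * y) = (((k : ℝ) / n) * y + 1) by ring, add_pow]
          simp only [one_pow, mul_one]
          exact (Finset.sum_congr rfl (fun j _ => by rw [mul_pow]; ring)).symm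
  · -- second inequality
    have h1 : 1 + ((k : ℝ) / n) * y ≤ Real.exp (((k : ℝ) / n) * x) := by
      have := Real.add_one_le_exp (((k : ℝ) / n) * y)
      have h2 : ((k : ℝ) / n) * y ≤ ((k : ℝ) / n) * x := by
        apply mul_le_mul_of_nonneg_left _ hp0
        simp only [hydef]; linarith
      calc 1 + ((k : ℝ) / n) * y = ((k : ℝ) / n) * y + 1 := by ring
        _ ≤ Real.exp (((k : ℝ) / n) * y) := this
        _ ≤ Real.exp (((k : ℝ) / n) * x) := Real.exp_le_exp.mpr h2
    have hbase : (0:ℝ) ≤ 1 + ((k : ℝ) / n) * y := by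
      have : 0 ≤ ((k : ℝ) / n) * y := mul_nonneg hp0 hy0
      linarith
    calc (1 + ((k : ℝ) / n) * y) ^ k
        ≤ (Real.exp (((k : ℝ) / n) * x)) ^ k := pow_le_pow_left₀ hbase h1 k
      _ = Real.exp ((k:ℕ) * (((k : ℝ) / n) * x)) := by rw [← Real.exp_nat_mul]
      _ = Real.exp (((k : ℝ) ^ 2 / n) * x) := by
          congr 1
          push_cast
          ring
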